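/- For μ, σ > 0, ∫_0^∞ (1/σ^2) exp(-(x + μ^2)/σ^2) I_1(2√x μ/σ^2) (√x/μ) dx = 1, i.e., E[(√X/μ) R(2√X μ/σ^2) I_0(2√X μ/σ^2)/I_0(2√X μ/σ^2)] computed against the noncentral chi-squared density equals 1. -/

import Mathlib

open Real MeasureTheory

/-- Modified Bessel function of the first kind of order 1 (integral representation). -/
noncomputable def besselI1 (z : ℝ) : ℝ :=
  (1 / Real.pi) * ∫ θ in (0:ℝ)..Real.pi, Real.exp (z * Real.cos θ) * Real.cos θ

section Aux

open intervalIntegral Finset Set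

lemma prodWallis (m : ℕ) : (∏ i ∈ range m, ((2*(i:ℝ)+1)/(2*i+2)))
    = (Nat.factorial (2*m) : ℝ) / (4^m * (Nat.factorial m : ℝ)^2) := by
  induction m with
  | zero => simp
  | succ n ih =>
    rw [prod_range_succ, ih]
    have h1 : (2*(n+1)) = (2*n+1)+1 := by ring
    rw [h1]
    push_cast [Nat.factorial_succ]
    have h4 : (4:ℝ)^(n+1) = 4 * 4^n := by ring
    rw [h4]
    have hf : ((Nat.factorial n :ℝ)) ≠ 0 := Nat.cast_ne_zero.2 n.factorial_ne_zero
    field_simp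
    ring

lemma cosOdd (k : ℕ) : (∫ θ in (0:ℝ)..π, Real.cos θ ^ (2*k+1)) = 0 := by
  induction k with
  | zero => simp
  | succ n ih =>
    have h := integral_cos_pow (a := 0) (b := π) (2*n+1)
    have h2 : 2*(n+1)+1 = (2*n+1)+2 := by ring
    rw [h2, h]
    simp [ih]

lemma cosEven' (k : ℕ) :
    (∫ θ in (0:ℝ)..π, Real.cos θ ^ (2*k)) = ∫ θ in (0:ℝ)..π, Real.sin θ ^ (2*k) := by
  induction k with
  | zero => simp
  | succ n ih =>
    have hc := integral_cos_pow (a := 0) (b := π) (2*n)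
    have hs := integral_sin_pow (a := 0) (b := π) (2*n)
    have h2 : 2*(n+1) = (2*n)+2 := by ring
    rw [h2, hc, hs, ih]
    simp

lemma cosEvenVal (k : ℕ) :
    (∫ θ in (0:ℝ)..π, Real.cos θ ^ (2*(k+1)))
      = π * (Nat.factorial (2*(k+1)) : ℝ) / (4^(k+1) * (Nat.factorial (k+1) : ℝ)^2) := by
  rw [cosEven', integral_sin_pow_even, prodWallis]
  ring

lemma besselI1_series {z : ℝ} (hz : 0 ≤ z) :
    besselI1 z = ∑' k : ℕ, z^(2*k+1) / (Nat.factorial (2*k+1) : ℝ) *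
      ((1/π) * ∫ θ in (0:ℝ)..π, Real.cos θ ^ (2*k+2)) := by
  have hπ : (0:ℝ) ≤ π := pi_pos.le
  have hpt : ∀ θ : ℝ, Real.exp (z * Real.cos θ) * Real.cos θ
      = ∑' n : ℕ, z^n * Real.cos θ^(n+1) / (Nat.factorial n : ℝ) := by
    intro θ
    rw [Real.exp_eq_exp_ℝ, NormedSpace.exp_eq_tsum_div, ← tsum_mul_right]
    congr 1; ext n
    rw [mul_pow]
    ring
  have hsum : Summable (fun n : ℕ => π * (z^n / (Nat.factorial n : ℝ))) :=
    (Real.summable_pow_div_factorial z).mul_left π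
  have hFint : ∀ n : ℕ, Integrable
      (fun θ : ℝ => z^n * Real.cos θ^(n+1) / (Nat.factorial n : ℝ))
      (volume.restrict (Set.Ioc (0:ℝ) π)) := by
    intro n
    have hc : Continuous (fun θ : ℝ => z^n * Real.cos θ^(n+1) / (Nat.factorial n : ℝ)) := by
      fun_prop
    exact hc.integrableOn_Ioc
  set F : ℕ → ℝ → ℝ := fun n θ => z^n * Real.cos θ^(n+1) / (Nat.factorial n : ℝ) with hF
  have hbd : ∀ n : ℕ, (∫ θ in Set.Ioc (0:ℝ) π, ‖F n θ‖) ≤ π * (z^n / (Nat.factorial n : ℝ)) := by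
    intro n
    have h1 : ∀ θ ∈ Set.Ioc (0:ℝ) π, ‖F n θ‖ ≤ z^n / (Nat.factorial n : ℝ) := by
      intro θ _
      have hc : |Real.cos θ ^ (n+1)| ≤ 1 := by
        rw [abs_pow]
        exact pow_le_one₀ (abs_nonneg _) (abs_cos_le_one θ)
      have hzn : (0:ℝ) ≤ z^n := pow_nonneg hz n
      have hfn : (0:ℝ) < (Nat.factorial n : ℝ) := by positivity
      rw [hF]
      simp only [Real.norm_eq_abs, abs_div, abs_mul, abs_pow, abs_of_nonneg hz,
        Nat.abs_cast]
      rw [div_le_div_iff_of_pos_right hfn]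
      calc z^n * |Real.cos θ|^(n+1) ≤ z^n * 1 := by
            refine mul_le_mul_of_nonneg_left ?_ hzn
            rw [← abs_pow]; exact hc
        _ = z^n := mul_one _
    have h2 := norm_setIntegral_le_of_norm_le_const (μ := volume)
      (s := Set.Ioc (0:ℝ) π) (f := fun θ => ‖F n θ‖)
      (C := z^n / (Nat.factorial n : ℝ))
      (by rw [Real.volume_Ioc]; exact ENNReal.ofReal_lt_top)
      (fun θ hθ => by rw [norm_norm]; exact h1 θ hθ)
    rw [Real.volume_real_Ioc_of_le hπ, sub_zero] at h2
    calc (∫ θ in Set.Ioc (0:ℝ) π, ‖F n θ‖)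
        ≤ ‖∫ θ in Set.Ioc (0:ℝ) π, ‖F n θ‖‖ := le_abs_self _
      _ ≤ z^n / (Nat.factorial n : ℝ) * π := h2
      _ = π * (z^n / (Nat.factorial n : ℝ)) := by ring
  have hsum' : Summable (fun n : ℕ => ∫ θ in Set.Ioc (0:ℝ) π, ‖F n θ‖) := by
    refine Summable.of_nonneg_of_le (fun n => ?_) (fun n => hbd n) hsum
    exact integral_nonneg (fun θ => norm_nonneg _)
  have hswap := MeasureTheory.integral_tsum_of_summable_integral_norm hFint hsum'
  have hterm : ∀ n : ℕ, (∫ θ in Set.Ioc (0:ℝ) π, F n θ)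
      = z^n / (Nat.factorial n : ℝ) * ∫ θ in (0:ℝ)..π, Real.cos θ^(n+1) := by
    intro n
    rw [intervalIntegral.integral_of_le hπ, ← MeasureTheory.integral_const_mul]
    congr 1; ext θ; rw [hF]; ring
  have key : (∫ θ in (0:ℝ)..π, Real.exp (z * Real.cos θ) * Real.cos θ)
      = ∑' n : ℕ, z^n / (Nat.factorial n : ℝ) * ∫ θ in (0:ℝ)..π, Real.cos θ^(n+1) := by
    rw [intervalIntegral.integral_of_le hπ]
    have : (∫ θ in Set.Ioc (0:ℝ) π, Real.exp (z * Real.cos θ) * Real.cos θ)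
        = ∫ θ in Set.Ioc (0:ℝ) π, ∑' n : ℕ, F n θ := by
      congr 1; ext θ; exact hpt θ
    rw [this, ← hswap]
    exact tsum_congr hterm
  set g : ℕ → ℝ := fun n => z^n / (Nat.factorial n : ℝ) * ∫ θ in (0:ℝ)..π, Real.cos θ^(n+1)
    with hg
  have hgbound : ∀ n : ℕ, ‖g n‖ ≤ π * (z^n / (Nat.factorial n : ℝ)) := by
    intro n
    have hB : ‖∫ θ in (0:ℝ)..π, Real.cos θ^(n+1)‖ ≤ 1 * |π - 0| := by
      refine intervalIntegral.norm_integral_le_of_norm_le_const (fun θ _ => ?_)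
      rw [Real.norm_eq_abs, abs_pow]
      exact pow_le_one₀ (abs_nonneg _) (abs_cos_le_one θ)
    rw [hg]
    simp only [norm_mul]
    have hzf : ‖z^n / (Nat.factorial n : ℝ)‖ = z^n / (Nat.factorial n : ℝ) := by
      rw [Real.norm_eq_abs, abs_of_nonneg (by positivity)]
    rw [hzf, mul_comm π _]
    refine mul_le_mul_of_nonneg_left ?_ (by positivity)
    calc ‖∫ θ in (0:ℝ)..π, Real.cos θ^(n+1)‖ ≤ 1 * |π - 0| := hB
      _ = π := by rw [one_mul, sub_zero, abs_of_nonneg hπ]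
  have hgsum : Summable g := Summable.of_norm_bounded hsum hgbound
  have hodd : Summable (fun k : ℕ => g (2*k+1)) := by
    have hinj : Function.Injective (fun k : ℕ => 2*k+1) := by
      intro a b h; dsimp at h; omega
    exact hgsum.comp_injective hinj
  have heven0 : ∀ k : ℕ, g (2*k) = 0 := by
    intro k
    rw [hg]
    simp only []
    rw [show 2*k+1 = 2*k+1 from rfl, cosOdd k, mul_zero]
  have heven : Summable (fun k : ℕ => g (2*k)) := by
    refine Summable.congr summable_zero (fun k => (heven0 k).symm)
  have hsplit := tsum_even_add_odd heven hodd
  rw [besselI1, key, ← hsplit]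
  have : (∑' k : ℕ, g (2*k)) = 0 := by
    rw [tsum_congr heven0]; exact tsum_zero
  rw [this, zero_add, ← tsum_mul_left]
  refine tsum_congr (fun k => ?_)
  rw [hg]
  have h21 : 2*k+1+1 = 2*k+2 := by ring
  simp only [h21]
  ring

lemma gammaInt {c : ℝ} (hc : 0 < c) (k : ℕ) :
    (∫ x in Ioi (0:ℝ), x^(k+1) * Real.exp (-(x/c)))
      = (Nat.factorial (k+1) : ℝ) * c^(k+2) := by
  have h := integral_rpow_mul_exp_neg_mul_Ioi (a := ((k:ℝ)+2)) (r := 1/c)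
    (by positivity) (by positivity)
  have h1 : ∀ x : ℝ, x ∈ Ioi (0:ℝ) →
      x ^ ((k:ℝ)+2-1) * Real.exp (-(1/c * x)) = x^(k+1) * Real.exp (-(x/c)) := by
    intro x hx
    have : ((k:ℝ)+2-1) = ((k+1 : ℕ):ℝ) := by push_cast; ring
    rw [this, Real.rpow_natCast]
    congr 1
    rw [one_div, inv_mul_eq_div]
  rw [setIntegral_congr_fun measurableSet_Ioi h1] at h
  rw [h, one_div_one_div]
  have h2 : ((k:ℝ)+2) = ((k+1:ℕ):ℝ)+1 := by push_cast; ring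
  rw [h2, Real.Gamma_nat_eq_factorial]
  rw [show (((k+1:ℕ):ℝ)+1) = ((k+2:ℕ):ℝ) by push_cast; ring, Real.rpow_natCast]
  ring

lemma gammaIntegrable {c : ℝ} (hc : 0 < c) (k : ℕ) :
    IntegrableOn (fun x => x^(k+1) * Real.exp (-(x/c))) (Ioi (0:ℝ)) := by
  have h := integrableOn_rpow_mul_exp_neg_mul_rpow
    (p := 1) (s := ((k:ℝ)+1)) (b := 1/c)
    (by have : (0:ℝ) ≤ (k:ℝ) := Nat.cast_nonneg k; linarith) zero_lt_one (by positivity)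
  refine h.congr_fun (fun x hx => ?_) measurableSet_Ioi
  have : ((k:ℝ)+1) = ((k+1 : ℕ):ℝ) := by push_cast; ring
  beta_reduce
  rw [this, Real.rpow_natCast, Real.rpow_one]
  congr 1
  rw [one_div, neg_mul, inv_mul_eq_div]

lemma coeffId {μ c : ℝ} (hμ : μ ≠ 0) (hc : c ≠ 0) (k : ℕ) :
    ((1/c) * Real.exp (-(μ^2)/c) * (1/μ) *
        ((2*μ/c)^(2*k+1) / (Nat.factorial (2*k+1) : ℝ)) *
        ((Nat.factorial (2*(k+1)) : ℝ) / (4^(k+1) * (Nat.factorial (k+1):ℝ)^2)))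
      * ((Nat.factorial (k+1) : ℝ) * c^(k+2))
    = Real.exp (-(μ^2)/c) * (μ^2/c)^k / (Nat.factorial k : ℝ) := by
  have hf1 : (Nat.factorial (2*(k+1)) : ℝ) = (2*(k:ℝ)+2) * (Nat.factorial (2*k+1) : ℝ) := by
    rw [show 2*(k+1) = (2*k+1)+1 by ring, Nat.factorial_succ]
    push_cast; ring
  have hf2 : (Nat.factorial (k+1):ℝ) = ((k:ℝ)+1) * (Nat.factorial k : ℝ) := by
    rw [Nat.factorial_succ]; push_cast; ring
  have hp : ((2*μ/c):ℝ)^(2*k+1) = 2^(2*k+1) * (μ^(2*k+1))/c^(2*k+1) := by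
    rw [div_pow, mul_pow]
  have hμp : μ^(2*k+1) = μ * (μ^2)^k := by
    rw [pow_succ', ← pow_mul]
  have h4 : (4:ℝ)^(k+1) = 2 * 2^(2*k+1) := by
    rw [show (4:ℝ) = 2^2 by norm_num, ← pow_mul]
    rw [show 2*(k+1) = (2*k+1)+1 by ring, pow_succ]; ring
  have hfk : (Nat.factorial k : ℝ) ≠ 0 := Nat.cast_ne_zero.2 k.factorial_ne_zero
  have hfk1 : (Nat.factorial (2*k+1) : ℝ) ≠ 0 := Nat.cast_ne_zero.2 (2*k+1).factorial_ne_zero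
  have h2 : (2:ℝ)^(2*k+1) ≠ 0 := by positivity
  have hck : (c:ℝ)^k ≠ 0 := pow_ne_zero _ hc
  rw [hf1, hf2, hp, hμp, h4, div_pow]
  field_simp
  ring

end Aux

/-- E[√X · I₁(2√X μ/σ²)/I₀(2√X μ/σ²)] = μ for X noncentral chi-squared; equivalently,
    ∫₀^∞ (1/σ²) e^{-(x+μ²)/σ²} I₁(2√x μ/σ²)(√x/μ) dx = 1. -/
theorem stmt_13 (μ σ : ℝ) (hμ : 0 < μ) (hσ : 0 < σ) :
    (∫ x in Set.Ioi (0:ℝ),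
      (1 / σ^2) * Real.exp (-(x + μ^2) / σ^2) * besselI1 (2 * Real.sqrt x * μ / σ^2) *
        (Real.sqrt x / μ))
    = 1 := by
  have hc : (0:ℝ) < σ^2 := by positivity
  have hπ := Real.pi_pos
  set C : ℕ → ℝ := fun k => (1/σ^2) * Real.exp (-(μ^2)/σ^2) * (1/μ) *
      ((2*μ/σ^2)^(2*k+1) / (Nat.factorial (2*k+1) : ℝ)) *
      ((Nat.factorial (2*(k+1)) : ℝ) / (4^(k+1) * (Nat.factorial (k+1):ℝ)^2)) with hCdef
  have hCnn : ∀ k, 0 ≤ C k := by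
    intro k; rw [hCdef]; positivity
  set F : ℕ → ℝ → ℝ := fun k x => C k * (x^(k+1) * Real.exp (-(x/σ^2))) with hFdef
  have hA : ∀ k : ℕ, ((1/π) * ∫ θ in (0:ℝ)..π, Real.cos θ ^ (2*k+2)) =
      (Nat.factorial (2*(k+1)) : ℝ) / (4^(k+1) * (Nat.factorial (k+1):ℝ)^2) := by
    intro k
    rw [show 2*k+2 = 2*(k+1) by ring, cosEvenVal]
    have hπ' : π ≠ 0 := ne_of_gt hπ
    field_simp
  have hpt : ∀ x ∈ Set.Ioi (0:ℝ),
      (1 / σ^2) * Real.exp (-(x + μ^2) / σ^2) * besselI1 (2 * Real.sqrt x * μ / σ^2) *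
        (Real.sqrt x / μ) = ∑' k, F k x := by
    intro x hx
    have hx0 : (0:ℝ) ≤ x := le_of_lt hx
    have hz : 0 ≤ 2 * Real.sqrt x * μ / σ^2 := by positivity
    rw [besselI1_series hz]
    have hAA : (∑' k : ℕ, (2 * Real.sqrt x * μ / σ^2)^(2*k+1) / (Nat.factorial (2*k+1) : ℝ) *
        ((1/π) * ∫ θ in (0:ℝ)..π, Real.cos θ ^ (2*k+2)))
        = ∑' k : ℕ, (2 * Real.sqrt x * μ / σ^2)^(2*k+1) / (Nat.factorial (2*k+1) : ℝ) *
          ((Nat.factorial (2*(k+1)) : ℝ) / (4^(k+1) * (Nat.factorial (k+1):ℝ)^2)) := by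
      refine tsum_congr (fun k => ?_)
      rw [hA k]
    rw [hAA, ← tsum_mul_left, ← tsum_mul_right]
    refine tsum_congr (fun k => ?_)
    have hexp : Real.exp (-(x + μ^2) / σ^2) = Real.exp (-(μ^2)/σ^2) * Real.exp (-(x/σ^2)) := by
      rw [← Real.exp_add]; congr 1; ring
    have hzpow : (2 * Real.sqrt x * μ / σ^2)^(2*k+1)
        = (2*μ/σ^2)^(2*k+1) * (Real.sqrt x)^(2*k+1) := by
      rw [show 2 * Real.sqrt x * μ / σ^2 = (2*μ/σ^2) * Real.sqrt x by ring, mul_pow]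
    have hsq : (Real.sqrt x)^(2*k+1) * Real.sqrt x = x^(k+1) := by
      rw [← pow_succ, show 2*k+1+1 = 2*(k+1) by ring, pow_mul, Real.sq_sqrt hx0]
    rw [hFdef, hCdef]
    simp only []
    rw [hexp, hzpow, ← hsq]
    ring
  rw [setIntegral_congr_fun measurableSet_Ioi hpt]
  have hint : ∀ k : ℕ, Integrable (F k) (volume.restrict (Set.Ioi (0:ℝ))) := by
    intro k
    rw [hFdef]
    exact (gammaIntegrable hc k).const_mul (C k)
  have hval : ∀ k : ℕ, (∫ x in Set.Ioi (0:ℝ), F k x)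
      = Real.exp (-(μ^2)/σ^2) * (μ^2/σ^2)^k / (Nat.factorial k : ℝ) := by
    intro k
    have : (∫ x in Set.Ioi (0:ℝ), F k x)
        = C k * ∫ x in Set.Ioi (0:ℝ), x^(k+1) * Real.exp (-(x/σ^2)) := by
      rw [hFdef, integral_const_mul]
    rw [this, gammaInt hc k, hCdef]
    exact coeffId (ne_of_gt hμ) (ne_of_gt hc) k
  have hnormval : ∀ k : ℕ, (∫ x in Set.Ioi (0:ℝ), ‖F k x‖)
      = Real.exp (-(μ^2)/σ^2) * (μ^2/σ^2)^k / (Nat.factorial k : ℝ) := by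
    intro k
    have heq : ∀ x ∈ Set.Ioi (0:ℝ), ‖F k x‖ = F k x := by
      intro x hx
      have hx0 : (0:ℝ) ≤ x := le_of_lt hx
      rw [Real.norm_eq_abs, abs_of_nonneg]
      rw [hFdef]
      have := hCnn k
      positivity
    rw [setIntegral_congr_fun measurableSet_Ioi heq]
    exact hval k
  have hsummain : Summable (fun k : ℕ =>
      Real.exp (-(μ^2)/σ^2) * (μ^2/σ^2)^k / (Nat.factorial k : ℝ)) := by
    refine Summable.congr
      (((Real.summable_pow_div_factorial (μ^2/σ^2)).mul_left (Real.exp (-(μ^2)/σ^2)))) ?_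
    intro k
    rw [mul_div_assoc]
  have hnorm : Summable (fun k : ℕ => ∫ x in Set.Ioi (0:ℝ), ‖F k x‖) := by
    refine Summable.congr hsummain (fun k => (hnormval k).symm)
  rw [← MeasureTheory.integral_tsum_of_summable_integral_norm hint hnorm]
  rw [tsum_congr hval]
  have hexpsum : (∑' k : ℕ, (μ^2/σ^2)^k / (Nat.factorial k : ℝ)) = Real.exp (μ^2/σ^2) := by
    rw [Real.exp_eq_exp_ℝ, NormedSpace.exp_eq_tsum_div]
  calc (∑' k : ℕ, Real.exp (-(μ^2)/σ^2) * (μ^2/σ^2)^k / (Nat.factorial k : ℝ))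
      = Real.exp (-(μ^2)/σ^2) * ∑' k : ℕ, (μ^2/σ^2)^k / (Nat.factorial k : ℝ) := by
        rw [← tsum_mul_left]
        exact tsum_congr (fun k => by rw [mul_div_assoc])
    _ = Real.exp (-(μ^2)/σ^2) * Real.exp (μ^2/σ^2) := by rw [hexpsum]
    _ = 1 := by rw [← Real.exp_add, show -(μ^2)/σ^2 + μ^2/σ^2 = 0 by ring, Real.exp_zero]
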